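/- Duality identity (Lemma 3.5, second identity). For every n ≥ 1, every function g : 𝕏^n → ℝ and every i, j ∈ 𝕏: 𝔼_i( g(X_1, …, X_n) ; X_{n+1} = j ) = 𝔼*_j( g(X*_n, …, X*_1) ; X*_{n+1} = i ) · ν(j)/ν(i), where 𝔼(·; A) denotes expectation restricted to the event A. -/

import Mathlib

/- STATEMENT 9: Duality identity (Lemma 3.5, second identity).
𝕏 finite nonempty, P stochastic, ν a positive P-invariant probability,
P*(i,j) = ν(j)P(j,i)/ν(i), (X_n) the chain with kernel P under ℙ_i and
(X*_n) the chain with kernel P* under ℙ*_j. For every n ≥ 1, g : 𝕏^n → ℝ, i, j: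
𝔼_i(g(X_1,…,X_n); X_{n+1}=j) = 𝔼*_j(g(X*_n,…,X*_1); X*_{n+1}=i)·ν(j)/ν(i). -/

open Finset Filter MeasureTheory

namespace Stmt9

/-- Extend a finite path by a terminal value. -/
def extPath {𝕏 : Type*} (n : ℕ) (x : Fin n → 𝕏) (b : 𝕏) : ℕ → 𝕏 :=
  fun m => if h : m < n then x ⟨m, h⟩ else b

lemma extPath_lt {𝕏 : Type*} {n : ℕ} (x : Fin n → 𝕏) (b : 𝕏) {m : ℕ} (h : m < n) :
    extPath n x b m = x ⟨m, h⟩ := dif_pos h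

lemma extPath_ge {𝕏 : Type*} {n : ℕ} (x : Fin n → 𝕏) (b : 𝕏) {m : ℕ} (h : n ≤ m) :
    extPath n x b m = b := dif_neg (by omega)

/-- The full path including the start state. -/
def pathFn {𝕏 : Type*} (n : ℕ) (i b : 𝕏) (x : Fin n → 𝕏) : ℕ → 𝕏 :=
  fun m => if m = 0 then i else extPath n x b (m - 1)

lemma pathFn_zero {𝕏 : Type*} (n : ℕ) (i b : 𝕏) (x : Fin n → 𝕏) :
    pathFn n i b x 0 = i := rfl

lemma pathFn_succ {𝕏 : Type*} (n : ℕ) (i b : 𝕏) (x : Fin n → 𝕏) (m : ℕ) :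
    pathFn n i b x (m + 1) = extPath n x b m := by simp [pathFn]

lemma telescope {𝕏 : Type*} (P : 𝕏 → 𝕏 → ℝ) (ν : 𝕏 → ℝ) (hν : ∀ i, 0 < ν i) (d : ℕ → 𝕏) :
    ∀ n, ∏ k ∈ Finset.range n, (ν (d (k+1)) * P (d (k+1)) (d k) / ν (d k)) =
      (ν (d n) / ν (d 0)) * ∏ k ∈ Finset.range n, P (d (k+1)) (d k) := by
  intro n; induction n with
  | zero => simp [div_self (hν (d 0)).ne']
  | succ n ih =>
    rw [Finset.prod_range_succ, ih, Finset.prod_range_succ]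
    have h0 := (hν (d 0)).ne'
    have hn := (hν (d n)).ne'
    field_simp

lemma integral_eq_sum_paths {𝕏 : Type*} [Fintype 𝕏] [MeasurableSpace 𝕏] [MeasurableSingletonClass 𝕏]
    {Ω : Type*} [MeasurableSpace Ω] (μ : Measure Ω) [IsFiniteMeasure μ]
    {m : ℕ} (Z : Fin m → Ω → 𝕏) (hZ : ∀ k, Measurable (Z k)) (F : (Fin m → 𝕏) → ℝ) :
    ∫ ω, F (fun k => Z k ω) ∂μ = ∑ x : Fin m → 𝕏, F x * (μ {ω | ∀ k, Z k ω = x k}).toReal := by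
  have hT : Measurable (fun ω => (fun k => Z k ω) : Ω → (Fin m → 𝕏)) :=
    measurable_pi_lambda _ hZ
  have hF : Measurable F := measurable_of_countable F
  rw [← integral_map hT.aemeasurable hF.aestronglyMeasurable]
  rw [integral_fintype (hf := by exact Integrable.of_finite)]
  refine Finset.sum_congr rfl fun x _ => ?_
  unfold Measure.real
  rw [Measure.map_apply hT (measurableSet_singleton x)]
  have : (fun ω => (fun k => Z k ω)) ⁻¹' {x} = {ω | ∀ k, Z k ω = x k} := by
    ext ω; simp [funext_iff]
  rw [this, smul_eq_mul, mul_comm]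

lemma chain_integral {𝕏 : Type*} [Fintype 𝕏] [MeasurableSpace 𝕏] [MeasurableSingletonClass 𝕏]
    {Ω : Type*} [MeasurableSpace Ω] (μ : Measure Ω) [IsProbabilityMeasure μ]
    (X : ℕ → Ω → 𝕏) (hX : ∀ k, Measurable (X k))
    (W : 𝕏 → 𝕏 → ℝ) (hW : ∀ a b, 0 ≤ W a b) (a b : 𝕏) (n : ℕ)
    (hchain : ∀ (m : ℕ) (x : ℕ → 𝕏),
      μ {ω | X 0 ω = a ∧ ∀ k < m, X (k + 1) ω = x k} =
        ENNReal.ofReal (∏ k ∈ Finset.range m, W (if k = 0 then a else x (k - 1)) (x k)))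
    (F : (Fin n → 𝕏) → ℝ) :
    ∫ ω in {ω | X (n + 1) ω = b}, F (fun k : Fin n => X (k.1 + 1) ω) ∂μ
      = ∑ x : Fin n → 𝕏, F x *
          ∏ k ∈ Finset.range (n + 1),
            W (if k = 0 then a else extPath n x b (k - 1)) (extPath n x b k) := by
  have hs : MeasurableSet {ω | X (n + 1) ω = b} := hX (n + 1) (measurableSet_singleton b)
  have h1 : μ {ω | X 0 ω = a} = 1 := by
    have := hchain 0 (fun _ => a)
    simpa using this
  have h0 : μ {ω | X 0 ω = a}ᶜ = 0 := by
    have hms : MeasurableSet {ω | X 0 ω = a} := hX 0 (measurableSet_singleton a)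
    rw [measure_compl hms (measure_ne_top _ _), h1, measure_univ]
    simp
  have hstep : ∫ ω in {ω | X (n + 1) ω = b}, F (fun k : Fin n => X (k.1 + 1) ω) ∂μ
      = ∑ x : Fin n → 𝕏, F x *
          ((μ.restrict {ω | X (n + 1) ω = b}) {ω | ∀ k : Fin n, X (k.1 + 1) ω = x k}).toReal :=
    integral_eq_sum_paths (μ.restrict _) (fun k : Fin n => X (k.1 + 1)) (fun k => hX _) F
  rw [hstep]
  refine Finset.sum_congr rfl fun x _ => ?_
  congr 1
  have hA : MeasurableSet {ω | ∀ k : Fin n, X (k.1 + 1) ω = x k} := by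
    have : {ω | ∀ k : Fin n, X (k.1 + 1) ω = x k} = ⋂ k : Fin n, X (k.1 + 1) ⁻¹' {x k} := by
      ext ω; simp
    rw [this]
    exact MeasurableSet.iInter fun k => hX _ (measurableSet_singleton _)
  rw [Measure.restrict_apply hA, ← measure_inter_conull h0]
  have hset : ({ω | ∀ k : Fin n, X (k.1 + 1) ω = x k} ∩ {ω | X (n + 1) ω = b}) ∩ {ω | X 0 ω = a}
      = {ω | X 0 ω = a ∧ ∀ k < n + 1, X (k + 1) ω = extPath n x b k} := by
    ext ω
    simp only [Set.mem_inter_iff, Set.mem_setOf_eq]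
    constructor
    · rintro ⟨⟨h1', h2'⟩, h3'⟩
      refine ⟨h3', fun k hk => ?_⟩
      rcases lt_or_ge k n with hkn | hkn
      · rw [extPath_lt x b hkn]; exact h1' ⟨k, hkn⟩
      · have hkn' : k = n := by omega
        subst hkn'
        rw [extPath_ge x b hkn]; exact h2'
    · rintro ⟨ha, h1'⟩
      refine ⟨⟨fun k => ?_, ?_⟩, ha⟩
      · have := h1' k.1 (by omega)
        rwa [extPath_lt x b k.2] at this
      · have := h1' n (by omega)
        rwa [extPath_ge x b le_rfl] at this
  rw [hset, hchain (n + 1) (extPath n x b)]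
  exact ENNReal.toReal_ofReal (Finset.prod_nonneg fun k _ => hW _ _)

lemma prod_dual_eq {𝕏 : Type*} (P : 𝕏 → 𝕏 → ℝ) (ν : 𝕏 → ℝ) (hν : ∀ a, 0 < ν a)
    (n : ℕ) (i j : 𝕏) (x : Fin n → 𝕏) :
    ∏ k ∈ Finset.range (n + 1),
        (fun a b => ν b * P b a / ν a)
          (if k = 0 then j else extPath n (x ∘ Fin.rev) i (k - 1))
          (extPath n (x ∘ Fin.rev) i k)
      = (ν i / ν j) * ∏ k ∈ Finset.range (n + 1),
          P (if k = 0 then i else extPath n x j (k - 1)) (extPath n x j k) := by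
  set c : ℕ → 𝕏 := pathFn n i j x with hc
  have hd0 : c (n + 1) = j := by rw [hc, pathFn_succ, extPath_ge x j le_rfl]
  have hA : ∀ k, k < n + 1 →
      (if k = 0 then j else extPath n (x ∘ Fin.rev) i (k - 1)) = c (n + 1 - k) := by
    intro k hk
    rcases Nat.eq_zero_or_pos k with hk0 | hk1
    · subst hk0
      simpa using hd0.symm
    · rw [if_neg (by omega)]
      have hk1n : k - 1 < n := by omega
      rw [extPath_lt (x ∘ Fin.rev) i hk1n]
      have h2 : n + 1 - k = (n - k) + 1 := by omega
      rw [h2, hc, pathFn_succ, extPath_lt x j (show n - k < n by omega)]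
      show x (Fin.rev ⟨k - 1, hk1n⟩) = x ⟨n - k, by omega⟩
      congr 1
      apply Fin.ext
      rw [Fin.val_rev]
      simp only [Fin.val_mk]
      omega
  have hB : ∀ k, k < n + 1 → extPath n (x ∘ Fin.rev) i k = c (n + 1 - (k + 1)) := by
    intro k hk
    rcases lt_or_ge k n with hkn | hkn
    · rw [extPath_lt (x ∘ Fin.rev) i hkn]
      have h2 : n + 1 - (k + 1) = (n - k - 1) + 1 := by omega
      rw [h2, hc, pathFn_succ, extPath_lt x j (show n - k - 1 < n by omega)]
      show x (Fin.rev ⟨k, hkn⟩) = x ⟨n - k - 1, by omega⟩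
      exact congrArg x (by apply Fin.ext; rw [Fin.val_rev]; simp only [Fin.val_mk]; omega)
    · have hkn' : k = n := by omega
      subst hkn'
      rw [extPath_ge (x ∘ Fin.rev) i le_rfl]
      simp [hc, pathFn_zero]
  have step1 : ∏ k ∈ Finset.range (n + 1),
      (fun a b => ν b * P b a / ν a)
        (if k = 0 then j else extPath n (x ∘ Fin.rev) i (k - 1))
        (extPath n (x ∘ Fin.rev) i k)
      = ∏ k ∈ Finset.range (n + 1),
          (ν ((fun m => c (n + 1 - m)) (k + 1)) * P ((fun m => c (n + 1 - m)) (k + 1))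
            ((fun m => c (n + 1 - m)) k) / ν ((fun m => c (n + 1 - m)) k)) := by
    refine Finset.prod_congr rfl fun k hk => ?_
    have hk' := Finset.mem_range.mp hk
    simp only []
    rw [hA k hk', hB k hk']
  rw [step1, telescope P ν hν (fun m => c (n + 1 - m)) (n + 1)]
  have e1 : c (n + 1 - (n + 1)) = i := by simp [hc, pathFn]
  have e2 : c (n + 1 - 0) = j := by simpa using hd0
  rw [e1, e2]
  congr 1
  calc ∏ k ∈ Finset.range (n + 1), P (c (n + 1 - (k + 1))) (c (n + 1 - k))
      = ∏ k ∈ Finset.range (n + 1), P (c (n + 1 - 1 - k)) (c (n + 1 - 1 - k + 1)) := by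
        refine Finset.prod_congr rfl fun k hk => ?_
        have hk' := Finset.mem_range.mp hk
        rw [show n + 1 - (k + 1) = n + 1 - 1 - k by omega,
          show n + 1 - k = n + 1 - 1 - k + 1 by omega]
    _ = ∏ k ∈ Finset.range (n + 1), P (c k) (c (k + 1)) :=
        Finset.prod_range_reflect (fun k => P (c k) (c (k + 1))) (n + 1)
    _ = ∏ k ∈ Finset.range (n + 1),
          P (if k = 0 then i else extPath n x j (k - 1)) (extPath n x j k) := by
        refine Finset.prod_congr rfl fun k hk => ?_
        rw [hc, pathFn_succ]
        simp [pathFn]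

theorem duality_identity
    {𝕏 : Type*} [Fintype 𝕏] [Nonempty 𝕏]
    [MeasurableSpace 𝕏] [MeasurableSingletonClass 𝕏]
    (P : 𝕏 → 𝕏 → ℝ)
    (hP_nonneg : ∀ i j, 0 ≤ P i j) (hP_row : ∀ i, ∑ j, P i j = 1)
    (ν : 𝕏 → ℝ) (hν_pos : ∀ i, 0 < ν i) (hν_sum : ∑ i, ν i = 1)
    (hν_inv : ∀ j, ∑ i, ν i * P i j = ν j)
    {Ω : Type*} [MeasurableSpace Ω]
    (Pr : 𝕏 → Measure Ω) (hPr : ∀ i, IsProbabilityMeasure (Pr i))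
    (X : ℕ → Ω → 𝕏) (hX : ∀ n, Measurable (X n))
    (hchain : ∀ i (n : ℕ) (x : ℕ → 𝕏),
      Pr i {ω | X 0 ω = i ∧ ∀ k < n, X (k + 1) ω = x k} =
        ENNReal.ofReal (∏ k ∈ Finset.range n, P (if k = 0 then i else x (k - 1)) (x k)))
    {Ω' : Type*} [MeasurableSpace Ω']
    (Prs : 𝕏 → Measure Ω') (hPrs : ∀ j, IsProbabilityMeasure (Prs j))
    (Y : ℕ → Ω' → 𝕏) (hY : ∀ n, Measurable (Y n))
    -- (Y_n) is the dual chain, with transition matrix P*(i,j) = ν(j)P(j,i)/ν(i):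
    (hchain_star : ∀ j (n : ℕ) (x : ℕ → 𝕏),
      Prs j {ω | Y 0 ω = j ∧ ∀ k < n, Y (k + 1) ω = x k} =
        ENNReal.ofReal (∏ k ∈ Finset.range n,
          (fun a b => ν b * P b a / ν a) (if k = 0 then j else x (k - 1)) (x k))) :
    ∀ n : ℕ, 1 ≤ n → ∀ (g : (Fin n → 𝕏) → ℝ) (i j : 𝕏),
      ∫ ω in {ω | X (n + 1) ω = j}, g (fun k : Fin n => X (k.1 + 1) ω) ∂(Pr i) =
        (∫ ω in {ω | Y (n + 1) ω = i}, g (fun k : Fin n => Y (n - k.1) ω) ∂(Prs j)) *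
          (ν j / ν i) := by
  intro n hn g i j
  haveI := hPr i
  haveI := hPrs j
  have hWs : ∀ a b : 𝕏, 0 ≤ (fun a b => ν b * P b a / ν a) a b := fun a b =>
    div_nonneg (mul_nonneg (hν_pos b).le (hP_nonneg b a)) (hν_pos a).le
  -- left side
  have h1 := chain_integral (Pr i) X hX P hP_nonneg i j n (hchain i) g
  -- right side
  have hidx : ∀ k : Fin n, n - (k.1 + 1) < n := fun k => by omega
  have h2 := chain_integral (Prs j) Y hY (fun a b => ν b * P b a / ν a) hWs j i n
    (hchain_star j) (fun y => g (fun k => y ⟨n - (k.1 + 1), hidx k⟩))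
  have h3 : ∫ ω in {ω | Y (n + 1) ω = i}, g (fun k : Fin n => Y (n - k.1) ω) ∂(Prs j)
      = ∑ y : Fin n → 𝕏, (g (fun k => y ⟨n - (k.1 + 1), hidx k⟩)) *
          ∏ k ∈ Finset.range (n + 1),
            (fun a b => ν b * P b a / ν a)
              (if k = 0 then j else extPath n y i (k - 1)) (extPath n y i k) := by
    refine Eq.trans ?_ h2
    refine integral_congr_ae (Filter.Eventually.of_forall fun ω => ?_)
    show g (fun k : Fin n => Y (n - k.1) ω) = g (fun k : Fin n => Y ((n - (k.1 + 1)) + 1) ω)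
    congr 1
    funext k
    have : n - k.1 = (n - (k.1 + 1)) + 1 := by omega
    rw [this]
  rw [h1, h3]
  -- now pure algebra
  have hbij : Function.Bijective (fun x : Fin n → 𝕏 => x ∘ Fin.rev) := by
    apply Function.Involutive.bijective
    intro x
    funext k
    simp [Function.comp, Fin.rev_rev]
  have hterm : ∀ x : Fin n → 𝕏,
      (g x * ∏ k ∈ Finset.range (n + 1),
          P (if k = 0 then i else extPath n x j (k - 1)) (extPath n x j k)) * (ν i / ν j)
      = (g (fun k => (x ∘ Fin.rev) ⟨n - (k.1 + 1), hidx k⟩)) *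
          ∏ k ∈ Finset.range (n + 1),
            (fun a b => ν b * P b a / ν a)
              (if k = 0 then j else extPath n (x ∘ Fin.rev) i (k - 1))
              (extPath n (x ∘ Fin.rev) i k) := by
    intro x
    rw [prod_dual_eq P ν hν_pos n i j x]
    have hg : (fun k : Fin n => (x ∘ Fin.rev) ⟨n - (k.1 + 1), hidx k⟩) = x := by
      funext k
      show x (Fin.rev ⟨n - (k.1 + 1), hidx k⟩) = x k
      congr 1
      apply Fin.ext
      rw [Fin.val_rev]
      simp only [Fin.val_mk]
      omega
    rw [hg]
    ring
  have hsum : ∑ y : Fin n → 𝕏, (g (fun k => y ⟨n - (k.1 + 1), hidx k⟩)) *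
      ∏ k ∈ Finset.range (n + 1),
        (fun a b => ν b * P b a / ν a)
          (if k = 0 then j else extPath n y i (k - 1)) (extPath n y i k)
      = (∑ x : Fin n → 𝕏, g x * ∏ k ∈ Finset.range (n + 1),
          P (if k = 0 then i else extPath n x j (k - 1)) (extPath n x j k)) * (ν i / ν j) := by
    rw [Finset.sum_mul]
    exact (Fintype.sum_bijective (fun x : Fin n → 𝕏 => x ∘ Fin.rev) hbij _ _ hterm).symm
  rw [hsum, mul_assoc]
  have : ν i / ν j * (ν j / ν i) = 1 := by
    rw [div_mul_div_comm, mul_comm (ν i) (ν j)]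
    exact div_self (mul_pos (hν_pos j) (hν_pos i)).ne'
  rw [this, mul_one]

end Stmt9
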